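/- Assume every solution of dR/dZ = -tan θ + R/(2Z), dθ/dZ = (n-1)(1/cos θ - 1/R) defined on all of (0,∞) (with R > 0, θ ∈ (-π/2,π/2)) converges to (1,0) as Z → ∞ and satisfies R(Z) = 1 + o(1/Z), θ(Z) = 1/(2Z) + o(1/Z). Then any two such solutions are equal: the singular solution is unique. -/

import Mathlib

open Real Filter
section Helpers
open Set


lemma mvt_uIcc {f f' : ℝ → ℝ} {a b : ℝ}
    (hf : ∀ x ∈ Set.uIcc a b, HasDerivAt f (f' x) x) :
    ∃ c ∈ Set.uIcc a b, f b - f a = f' c * (b - a) := by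
  rcases lt_trichotomy a b with hab | hab | hab
  · have hc : ContinuousOn f (Icc a b) := fun x hx =>
      (hf x (by rwa [Set.uIcc_of_le hab.le])).continuousAt.continuousWithinAt
    obtain ⟨c, hc1, hc2⟩ := exists_hasDerivAt_eq_slope f f' hab hc
      (fun x hx => hf x (by rw [Set.uIcc_of_le hab.le]; exact Ioo_subset_Icc_self hx))
    refine ⟨c, by rw [Set.uIcc_of_le hab.le]; exact Ioo_subset_Icc_self hc1, ?_⟩
    rw [eq_div_iff (sub_ne_zero.2 hab.ne')] at hc2
    linarith [hc2]
  · exact ⟨a, Set.left_mem_uIcc, by rw [hab]; ring⟩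
  · have hc : ContinuousOn f (Icc b a) := fun x hx =>
      (hf x (by rwa [Set.uIcc_of_ge hab.le])).continuousAt.continuousWithinAt
    obtain ⟨c, hc1, hc2⟩ := exists_hasDerivAt_eq_slope f f' hab hc
      (fun x hx => hf x (by rw [Set.uIcc_of_ge hab.le]; exact Ioo_subset_Icc_self hx))
    refine ⟨c, by rw [Set.uIcc_of_ge hab.le]; exact Ioo_subset_Icc_self hc1, ?_⟩
    rw [eq_div_iff (sub_ne_zero.2 hab.ne')] at hc2
    linarith [hc2]

lemma tan_sub_mvt {a b : ℝ} (ha : a ∈ Set.Ioo (-(π/2)) (π/2)) (hb : b ∈ Set.Ioo (-(π/2)) (π/2)) :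
    ∃ ξ ∈ Set.uIcc a b, Real.tan b - Real.tan a = 1 / Real.cos ξ ^ 2 * (b - a) := by
  have hsub : Set.uIcc a b ⊆ Set.Ioo (-(π/2)) (π/2) :=
    Set.ordConnected_Ioo.uIcc_subset ha hb
  exact mvt_uIcc (fun x hx => Real.hasDerivAt_tan
    (Real.cos_pos_of_mem_Ioo (hsub hx)).ne')

lemma sec_sub_mvt {a b : ℝ} (ha : a ∈ Set.Ioo (-(π/2)) (π/2)) (hb : b ∈ Set.Ioo (-(π/2)) (π/2)) :
    ∃ ξ ∈ Set.uIcc a b, 1 / Real.cos b - 1 / Real.cos a = Real.sin ξ / Real.cos ξ ^ 2 * (b - a) := by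
  have hsub : Set.uIcc a b ⊆ Set.Ioo (-(π/2)) (π/2) :=
    Set.ordConnected_Ioo.uIcc_subset ha hb
  have key : ∀ x ∈ Set.uIcc a b,
      HasDerivAt (fun y => 1 / Real.cos y) (Real.sin x / Real.cos x ^ 2) x := by
    intro x hx
    have hc : Real.cos x ≠ 0 := (Real.cos_pos_of_mem_Ioo (hsub hx)).ne'
    have := (Real.hasDerivAt_cos x).fun_inv hc
    simpa [one_div, neg_div, neg_neg] using this
  exact mvt_uIcc key

lemma abs_uIcc_le {x y ξ : ℝ} (hξ : ξ ∈ Set.uIcc x y) : |ξ| ≤ max |x| |y| := by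
  rcases Set.mem_uIcc.mp hξ with ⟨h1, h2⟩ | ⟨h1, h2⟩
  · exact abs_le_max_abs_abs h1 h2
  · rw [max_comm]; exact abs_le_max_abs_abs h1 h2

lemma cos_min_le {x y ξ : ℝ} (hx : x ∈ Set.Ioo (-(π/2)) (π/2)) (hy : y ∈ Set.Ioo (-(π/2)) (π/2))
    (hξ : ξ ∈ Set.uIcc x y) : min (Real.cos x) (Real.cos y) ≤ Real.cos ξ := by
  have h1 : |ξ| ≤ max |x| |y| := abs_uIcc_le hξ
  have hxpi : |x| < π / 2 := abs_lt.mpr ⟨by linarith [hx.1], hx.2⟩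
  have hypi : |y| < π / 2 := abs_lt.mpr ⟨by linarith [hy.1], hy.2⟩
  have hpi : max |x| |y| ≤ π := by
    rcases max_cases |x| |y| with ⟨hm, _⟩ | ⟨hm, _⟩ <;> rw [hm] <;>
      [linarith [hxpi, Real.pi_pos]; linarith [hypi, Real.pi_pos]]
  have h2 : Real.cos (max |x| |y|) ≤ Real.cos |ξ| :=
    Real.cos_le_cos_of_nonneg_of_le_pi (abs_nonneg ξ) hpi h1
  rw [Real.cos_abs] at h2
  rcases max_cases |x| |y| with ⟨hm, _⟩ | ⟨hm, _⟩ <;> rw [hm, Real.cos_abs] at h2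
  · exact le_trans (min_le_left _ _) h2
  · exact le_trans (min_le_right _ _) h2

lemma inv_close {x w : ℝ} (hw : 0 < w) (hw1 : w ≤ 1) (hx : |x - 1| ≤ w/16) :
    |1/x - 1| ≤ w/8 := by
  have h1 := abs_le.mp hx
  have hx0 : (1:ℝ)/2 < x := by linarith [h1.1]
  have heq : 1/x - 1 = (1 - x)/x := by field_simp
  rw [heq, abs_div, abs_sub_comm (1:ℝ) x, abs_of_pos (show (0:ℝ) < x by linarith),
    div_le_iff₀ (by linarith)]
  nlinarith [h1.1, h1.2]

lemma alg_nonneg {a b g e w : ℝ} (hw : 0 < w) (hg : w/8 ≤ g) (he : |e| ≤ w/4) :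
    0 ≤ a^2*(w/2) + g*b^2 + a*b*e := by
  have h1 := neg_abs_le (a*b*e)
  have habs : |a*b| ≤ (a^2+b^2)/2 := by
    rw [abs_mul]
    nlinarith [sq_nonneg (|a|-|b|), sq_abs a, sq_abs b, abs_nonneg a, abs_nonneg b]
  have h2 : |a*b*e| ≤ (a^2+b^2)/2*(w/4) := by
    rw [abs_mul]
    exact mul_le_mul habs he (abs_nonneg _) (by positivity)
  nlinarith [sq_nonneg a, sq_nonneg b, mul_le_mul_of_nonneg_right hg (sq_nonneg b),
    mul_nonneg (sq_nonneg a) hw.le]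


lemma inv_close' {x w : ℝ} (hw : 0 < w) (hw1 : w ≤ 1) (hx : |x - 1| ≤ w/16) :
    |1/x - 1| ≤ w/8 := by
  have h1 := abs_le.mp hx
  have hx0 : (1:ℝ)/2 < x := by linarith [h1.1]
  have heq : 1/x - 1 = (1 - x)/x := by field_simp
  rw [heq, abs_div, abs_sub_comm (1:ℝ) x, abs_of_pos (show (0:ℝ) < x by linarith),
    div_le_iff₀ (by linarith)]
  nlinarith [h1.1, h1.2]

lemma prod_close {a b w : ℝ} (hw : 0 < w) (hw1 : w ≤ 1/32)
    (ha : |a - 1| ≤ (1/48) * w) (hb : |b - 1| ≤ (1/48) * w) : |a*b - 1| ≤ w/16 := by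
  have ha' := abs_le.mp ha
  have hb' := abs_le.mp hb
  have hpq : |(a-1)*(b-1)| ≤ ((1/48)*w)*((1/48)*w) := by
    rw [abs_mul]
    exact mul_le_mul ha hb (abs_nonneg _) (by positivity)
  have hpq' := abs_le.mp hpq
  rw [abs_le]
  constructor <;> nlinarith [ha'.1, ha'.2, hb'.1, hb'.2, hpq'.1, hpq'.2]

set_option maxHeartbeats 1000000 in
lemma slope_bounds {w tθ tθt : ℝ} (hw : 0 < w) (hwle : w ≤ 1/32)
    (h1 : |tθ - w/2| ≤ (1/4) * w) (h2 : |tθt - w/2| ≤ (1/4) * w)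
    {ξ ξ₂ : ℝ} (hξmem : ξ ∈ Set.uIcc tθ tθt) (hξ₂mem : ξ₂ ∈ Set.uIcc tθ tθt)
    {P Pt : ℝ} (h3 : |P - 1| ≤ (1/48) * w) (h4 : |Pt - 1| ≤ (1/48) * w) :
    w/8 ≤ Real.sin ξ₂ / Real.cos ξ₂ ^ 2 ∧
      |1/(P*Pt) - 1/Real.cos ξ ^ 2| ≤ w/4 := by
  have h1' := abs_le.mp h1
  have h2' := abs_le.mp h2
  have h3' := abs_le.mp h3
  have h4' := abs_le.mp h4
  have hIcc : Set.uIcc tθ tθt ⊆ Set.Icc (w/4) (3*w/4) :=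
    Set.uIcc_subset_Icc ⟨by linarith [h1'.1], by linarith [h1'.2]⟩
      ⟨by linarith [h2'.1], by linarith [h2'.2]⟩
  have hξb := hIcc hξmem
  have hξ₂b := hIcc hξ₂mem
  have hξpos : 0 < ξ := lt_of_lt_of_le (by positivity) hξb.1
  have hξle1 : ξ ≤ 1 := by linarith [hξb.2, hwle]
  have hξ₂pos : 0 < ξ₂ := lt_of_lt_of_le (by positivity) hξ₂b.1
  have hξ₂le1 : ξ₂ ≤ 1 := by linarith [hξ₂b.2, hwle]
  have hξsq : ξ^2 ≤ 1 := pow_le_one₀ hξpos.le hξle1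
  have hξ₂sq : ξ₂^2 ≤ 1 := pow_le_one₀ hξ₂pos.le hξ₂le1
  have hcosξ : (1:ℝ)/2 ≤ Real.cos ξ := by
    linarith [Real.one_sub_sq_div_two_le_cos (x := ξ)]
  have hcosξ₂ : (1:ℝ)/2 ≤ Real.cos ξ₂ := by
    linarith [Real.one_sub_sq_div_two_le_cos (x := ξ₂)]
  have hcosξ₂le : Real.cos ξ₂ ≤ 1 := Real.cos_le_one ξ₂
  constructor
  · have hsinξ₂ : w/8 ≤ Real.sin ξ₂ := by
      have hs := Real.sin_gt_sub_cube hξ₂pos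
      nlinarith [hξ₂b.1, hξ₂b.2, sq_nonneg ξ₂, hw]
    have hsin0 : 0 ≤ Real.sin ξ₂ := by linarith [hsinξ₂, hw]
    have hcsq : Real.cos ξ₂ ^ 2 ≤ 1 := pow_le_one₀ (by linarith) hcosξ₂le
    have h0 : Real.sin ξ₂ ≤ Real.sin ξ₂ / Real.cos ξ₂ ^ 2 := by
      rw [le_div_iff₀ (by positivity)]
      nlinarith [mul_nonneg hsin0 (sub_nonneg.2 hcsq)]
    linarith
  · have hprod : |P * Pt - 1| ≤ w/16 := prod_close hw hwle h3 h4
    have hiRR : |1/(P * Pt) - 1| ≤ w/8 := inv_close' hw (by linarith) hprod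
    have hsinξle : Real.sin ξ ≤ ξ := Real.sin_le hξpos.le
    have hsinξ0 : 0 ≤ Real.sin ξ :=
      Real.sin_nonneg_of_nonneg_of_le_pi hξpos.le (by nlinarith [Real.pi_gt_three])
    have hcos2 : |Real.cos ξ ^ 2 - 1| ≤ w/16 := by
      have hid : Real.cos ξ ^ 2 - 1 = -(Real.sin ξ ^ 2) := by
        have := Real.sin_sq_add_cos_sq ξ; linarith
      rw [hid, abs_neg, abs_of_nonneg (sq_nonneg _)]
      nlinarith [hξb.2, hw, hwle]
    have hicos : |1/Real.cos ξ ^ 2 - 1| ≤ w/8 := inv_close' hw (by linarith) hcos2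
    have ht := abs_sub_le (1/(P * Pt)) 1 (1/Real.cos ξ ^ 2)
    rw [abs_sub_comm (1:ℝ) (1/Real.cos ξ ^ 2)] at ht
    linarith


lemma abs_uIcc_le' {x y ξ : ℝ} (hξ : ξ ∈ Set.uIcc x y) : |ξ| ≤ max |x| |y| := by
  rcases Set.mem_uIcc.mp hξ with ⟨h1, h2⟩ | ⟨h1, h2⟩
  · exact abs_le_max_abs_abs h1 h2
  · rw [max_comm]; exact abs_le_max_abs_abs h1 h2

lemma cos_min_le' {x y ξ : ℝ} (hx : x ∈ Set.Ioo (-(π/2)) (π/2)) (hy : y ∈ Set.Ioo (-(π/2)) (π/2))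
    (hξ : ξ ∈ Set.uIcc x y) : min (Real.cos x) (Real.cos y) ≤ Real.cos ξ := by
  have h1 : |ξ| ≤ max |x| |y| := abs_uIcc_le' hξ
  have hxpi : |x| < π / 2 := abs_lt.mpr ⟨by linarith [hx.1], hx.2⟩
  have hypi : |y| < π / 2 := abs_lt.mpr ⟨by linarith [hy.1], hy.2⟩
  have hpi : max |x| |y| ≤ π := by
    rcases max_cases |x| |y| with ⟨hm, _⟩ | ⟨hm, _⟩ <;> rw [hm] <;>
      [linarith [hxpi, Real.pi_pos]; linarith [hypi, Real.pi_pos]]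
  have h2 : Real.cos (max |x| |y|) ≤ Real.cos |ξ| :=
    Real.cos_le_cos_of_nonneg_of_le_pi (abs_nonneg ξ) hpi h1
  rw [Real.cos_abs] at h2
  rcases max_cases |x| |y| with ⟨hm, _⟩ | ⟨hm, _⟩ <;> rw [hm, Real.cos_abs] at h2
  · exact le_trans (min_le_left _ _) h2
  · exact le_trans (min_le_right _ _) h2

lemma slope_bounds_B {tθ tθt ξ ξ₂ : ℝ}
    (hθ : tθ ∈ Set.Ioo (-(π/2)) (π/2)) (hθt : tθt ∈ Set.Ioo (-(π/2)) (π/2))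
    (hξmem : ξ ∈ Set.uIcc tθ tθt) (hξ₂mem : ξ₂ ∈ Set.uIcc tθ tθt)
    {P Pt : ℝ} (hP : 0 < P) (hPt : 0 < Pt) :
    |Real.sin ξ₂ / Real.cos ξ₂ ^ 2| ≤ 1/(min (Real.cos tθ) (Real.cos tθt))^2 ∧
      |1/(P*Pt) - 1/Real.cos ξ ^ 2| ≤ 1/(P*Pt) + 1/(min (Real.cos tθ) (Real.cos tθt))^2 := by
  set c := min (Real.cos tθ) (Real.cos tθt) with hc_def
  have hc : 0 < c := lt_min (Real.cos_pos_of_mem_Ioo hθ) (Real.cos_pos_of_mem_Ioo hθt)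
  have hcξ : c ≤ Real.cos ξ := cos_min_le' hθ hθt hξmem
  have hcξ₂ : c ≤ Real.cos ξ₂ := cos_min_le' hθ hθt hξ₂mem
  have hcos2 : c^2 ≤ Real.cos ξ^2 := pow_le_pow_left₀ hc.le hcξ 2
  have hcos2₂ : c^2 ≤ Real.cos ξ₂^2 := pow_le_pow_left₀ hc.le hcξ₂ 2
  have hcξpos : (0:ℝ) < Real.cos ξ ^ 2 := lt_of_lt_of_le (by positivity) hcos2
  have hcξ₂pos : (0:ℝ) < Real.cos ξ₂ ^ 2 := lt_of_lt_of_le (by positivity) hcos2₂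
  constructor
  · rw [abs_div, abs_of_pos hcξ₂pos]
    exact div_le_div₀ (by positivity) (Real.abs_sin_le_one ξ₂) (by positivity) hcos2₂
  · have htri : |1/(P*Pt) - 1/Real.cos ξ ^ 2| ≤ |1/(P*Pt)| + |1/Real.cos ξ ^ 2| := by
      have := abs_add_le (1/(P*Pt)) (-(1/Real.cos ξ ^ 2))
      simpa [sub_eq_add_neg] using this
    have h1 : |1/(P*Pt)| = 1/(P*Pt) := abs_of_pos (by positivity)
    have h2 : |1/Real.cos ξ ^ 2| = 1/Real.cos ξ ^ 2 := abs_of_pos (by positivity)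
    have h3 : 1/Real.cos ξ ^ 2 ≤ 1/c^2 := by
      apply div_le_div₀ (by norm_num) le_rfl (by positivity) hcos2
    rw [h1, h2] at htri
    linarith

lemma alg_lower {a b g e P Q w nn : ℝ} (hn : 1 ≤ nn) (hw : 0 < w) (hP : 0 < P) (hQ : 0 < Q)
    (hg : |g| ≤ Q) (he : |e| ≤ P + Q) :
    -(2*(nn+1)*(P + 2*Q)) * (nn*a^2 + b^2) ≤ 2*nn*(a^2*(w/2) + g*b^2 + a*b*e) := by
  have h1 : -Q*b^2 ≤ g*b^2 :=
    mul_le_mul_of_nonneg_right (by linarith [neg_abs_le g]) (sq_nonneg b)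
  have habs : |a*b| ≤ (a^2+b^2)/2 := by
    rw [abs_mul]
    nlinarith [sq_nonneg (|a|-|b|), sq_abs a, sq_abs b, abs_nonneg a, abs_nonneg b]
  have h2 : -((P+Q)*((a^2+b^2)/2)) ≤ a*b*e := by
    have h3 : |a*b*e| ≤ (a^2+b^2)/2*(P+Q) := by
      rw [abs_mul]
      exact mul_le_mul habs he (abs_nonneg _) (by positivity)
    nlinarith [neg_abs_le (a*b*e)]
  have key2 : -((P+2*Q)*(a^2+b^2)) ≤ a^2*(w/2) + g*b^2 + a*b*e := by
    nlinarith [h1, h2, mul_nonneg hQ.le (sq_nonneg a), mul_nonneg hQ.le (sq_nonneg b),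
      mul_nonneg (sq_nonneg a) hw.le]
  have key1 : -(2*(nn+1)*(P + 2*Q)) * (nn*a^2 + b^2) ≤ 2*nn*(-((P+2*Q)*(a^2+b^2))) := by
    have h0 : (0:ℝ) ≤ nn^2*a^2 + b^2 := by positivity
    have hS : (0:ℝ) < P + 2*Q := by linarith
    nlinarith [mul_nonneg hS.le h0]
  have := mul_le_mul_of_nonneg_left key2 (show (0:ℝ) ≤ 2*nn by linarith)
  linarith

end Helpers

/-- `(R, θ)` is a solution of system (3) defined on all of `(0, ∞)`. -/
def IsSingularSolution (n : ℕ) (R θ : ℝ → ℝ) : Prop :=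
  (∀ Z > (0 : ℝ), 0 < R Z ∧ θ Z ∈ Set.Ioo (-(π / 2)) (π / 2)) ∧
  (∀ Z > (0 : ℝ), HasDerivAt R (-Real.tan (θ Z) + R Z / (2 * Z)) Z) ∧
  (∀ Z > (0 : ℝ), HasDerivAt θ (((n : ℝ) - 1) * (1 / Real.cos (θ Z) - 1 / R Z)) Z)

set_option maxHeartbeats 1600000 in
theorem uniqueness_of_singular_solution (n : ℕ) (hn : 2 ≤ n)
    (hyp : ∀ R θ : ℝ → ℝ, IsSingularSolution n R θ →
      Tendsto (fun Z => (R Z, θ Z)) atTop (nhds (1, 0)) ∧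
      ((fun Z => R Z - 1) =o[atTop] fun Z : ℝ => 1 / Z) ∧
      ((fun Z => θ Z - 1 / (2 * Z)) =o[atTop] fun Z : ℝ => 1 / Z)) :
    ∀ R θ Rt θt : ℝ → ℝ, IsSingularSolution n R θ → IsSingularSolution n Rt θt →
      ∀ Z > (0 : ℝ), R Z = Rt Z ∧ θ Z = θt Z := by
  intro R θ Rt θt hS hSt
  obtain ⟨hT, hRo, hθo⟩ := hyp R θ hS
  obtain ⟨hTt, hRto, hθto⟩ := hyp Rt θt hSt
  obtain ⟨hpos, hdR, hdθ⟩ := hS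
  obtain ⟨hpost, hdRt, hdθt⟩ := hSt
  clear hyp
  have hn1 : (1:ℝ) ≤ (n:ℝ) - 1 := by
    have : (2:ℝ) ≤ (n:ℝ) := by exact_mod_cast hn
    linarith
  set u : ℝ → ℝ := fun Z => Rt Z - R Z with hu_def
  set v : ℝ → ℝ := fun Z => θt Z - θ Z with hv_def
  set L : ℝ → ℝ := fun Z => ((n:ℝ)-1) * u Z ^ 2 + v Z ^ 2 with hL_def
  set D : ℝ → ℝ := fun Z =>
      2*((n:ℝ)-1) * u Z * (-(Real.tan (θt Z) - Real.tan (θ Z)) + u Z / (2*Z))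
      + 2 * v Z * (((n:ℝ)-1) * ((1/Real.cos (θt Z) - 1/Real.cos (θ Z)) + u Z / (R Z * Rt Z)))
    with hD_def
  have hLnonneg : ∀ Z, 0 ≤ L Z := by
    intro Z
    simp only [hL_def]
    nlinarith [sq_nonneg (u Z), sq_nonneg (v Z), hn1]
  -- derivative of u
  have hu' : ∀ Z, 0 < Z → HasDerivAt u
      (-(Real.tan (θt Z) - Real.tan (θ Z)) + u Z / (2*Z)) Z := by
    intro Z hZ
    have h := (hdRt Z hZ).sub (hdR Z hZ)
    refine h.congr_deriv ?_
    simp only [hu_def]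
    ring
  have hv' : ∀ Z, 0 < Z → HasDerivAt v
      (((n:ℝ)-1) * ((1/Real.cos (θt Z) - 1/Real.cos (θ Z)) + u Z / (R Z * Rt Z))) Z := by
    intro Z hZ
    have h := (hdθt Z hZ).sub (hdθ Z hZ)
    refine h.congr_deriv ?_
    have hR0 : R Z ≠ 0 := (hpos Z hZ).1.ne'
    have hRt0 : Rt Z ≠ 0 := (hpost Z hZ).1.ne'
    simp only [hu_def]
    field_simp
    ring
  have hL' : ∀ Z, 0 < Z → HasDerivAt L (D Z) Z := by
    intro Z hZ
    have h := (((hu' Z hZ).pow 2).const_mul ((n:ℝ)-1)).add ((hv' Z hZ).pow 2)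
    refine h.congr_deriv ?_
    simp only [hD_def]
    push_cast
    ring
  -- representation of D via mean value theorem
  have hDrepr : ∀ t, 0 < t → ∃ ξ ∈ Set.uIcc (θ t) (θt t), ∃ ξ₂ ∈ Set.uIcc (θ t) (θt t),
      D t = 2*((n:ℝ)-1) * (u t^2*((1/t)/2)
        + (Real.sin ξ₂ / Real.cos ξ₂ ^ 2) * v t^2
        + u t * v t * (1/(R t * Rt t) - 1/Real.cos ξ ^ 2)) := by
    intro t ht
    have hθmem := (hpos t ht).2
    have hθtmem := (hpost t ht).2
    obtain ⟨ξ, hξmem, hξ⟩ := tan_sub_mvt hθmem hθtmem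
    obtain ⟨ξ₂, hξ₂mem, hξ₂⟩ := sec_sub_mvt hθmem hθtmem
    refine ⟨ξ, hξmem, ξ₂, hξ₂mem, ?_⟩
    simp only [hD_def]
    rw [hξ, hξ₂]
    simp only [hv_def]
    have ht0 : t ≠ 0 := ht.ne'
    have hcξ : Real.cos ξ ≠ 0 :=
      (Real.cos_pos_of_mem_Ioo (Set.ordConnected_Ioo.uIcc_subset hθmem hθtmem hξmem)).ne'
    have hcξ₂ : Real.cos ξ₂ ≠ 0 :=
      (Real.cos_pos_of_mem_Ioo (Set.ordConnected_Ioo.uIcc_subset hθmem hθtmem hξ₂mem)).ne'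
    have hR0 : R t ≠ 0 := (hpos t ht).1.ne'
    have hRt0 : Rt t ≠ 0 := (hpost t ht).1.ne'
    field_simp
    ring
  -- Part A : choose Z₀ with smallness conditions
  have hev : ∀ᶠ Z in atTop, (32:ℝ) ≤ Z ∧
      |θ Z - 1/(2*Z)| ≤ (1/4) * |1/Z| ∧ |θt Z - 1/(2*Z)| ≤ (1/4) * |1/Z| ∧
      |R Z - 1| ≤ (1/48) * |1/Z| ∧ |Rt Z - 1| ≤ (1/48) * |1/Z| := by
    have e0 : ∀ᶠ Z : ℝ in atTop, (32:ℝ) ≤ Z := eventually_ge_atTop 32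
    have e1 := (Asymptotics.isLittleO_iff.mp hθo) (show (0:ℝ) < 1/4 by norm_num)
    have e2 := (Asymptotics.isLittleO_iff.mp hθto) (show (0:ℝ) < 1/4 by norm_num)
    have e3 := (Asymptotics.isLittleO_iff.mp hRo) (show (0:ℝ) < 1/48 by norm_num)
    have e4 := (Asymptotics.isLittleO_iff.mp hRto) (show (0:ℝ) < 1/48 by norm_num)
    filter_upwards [e0, e1, e2, e3, e4] with Z h0 h1 h2 h3 h4
    exact ⟨h0, by simpa [Real.norm_eq_abs, abs_inv] using h1,
      by simpa [Real.norm_eq_abs, abs_inv] using h2,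
      by simpa [Real.norm_eq_abs, abs_inv] using h3,
      by simpa [Real.norm_eq_abs, abs_inv] using h4⟩
  have hDnonneg : ∀ Z, 32 ≤ Z →
      |θ Z - 1/(2*Z)| ≤ (1/4) * |1/Z| → |θt Z - 1/(2*Z)| ≤ (1/4) * |1/Z| →
      |R Z - 1| ≤ (1/48) * |1/Z| → |Rt Z - 1| ≤ (1/48) * |1/Z| → 0 ≤ D Z := by
    intro Z hZ32 h1 h2 h3 h4
    have hZ : (0:ℝ) < Z := by linarith
    have hw : (0:ℝ) < 1/Z := by positivity
    have hwle : 1/Z ≤ 1/32 := by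
      rw [div_le_div_iff₀ hZ (by norm_num)]; linarith
    have habs : |1/Z| = 1/Z := abs_of_pos hw
    rw [habs] at h1 h2 h3 h4
    have hhalf : 1/(2*Z) = (1/Z)/2 := by rw [div_div, mul_comm]
    rw [hhalf] at h1 h2
    obtain ⟨ξ, hξmem, ξ₂, hξ₂mem, hDform⟩ := hDrepr Z hZ
    obtain ⟨hE2, hE1⟩ := slope_bounds hw hwle h1 h2 hξmem hξ₂mem h3 h4
    have key := alg_nonneg (a := u Z) (b := v Z) (g := Real.sin ξ₂ / Real.cos ξ₂ ^ 2)
      (e := 1/(R Z * Rt Z) - 1/Real.cos ξ ^ 2) hw hE2 hE1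
    rw [hDform]
    have h2n : (0:ℝ) ≤ 2*((n:ℝ)-1) := by linarith
    exact mul_nonneg h2n key
  obtain ⟨Z₀', hZ₀'⟩ := eventually_atTop.mp hev
  set Z₀ := max Z₀' 32 with hZ₀def
  have hZ₀32 : (32:ℝ) ≤ Z₀ := le_max_right _ _
  have hZ₀pos : (0:ℝ) < Z₀ := by linarith
  have hcond : ∀ Z, Z₀ ≤ Z → 0 ≤ D Z := by
    intro Z hZ
    obtain ⟨c0, c1, c2, c3, c4⟩ := hZ₀' Z (le_trans (le_max_left _ _) hZ)
    exact hDnonneg Z (le_trans hZ₀32 hZ) c1 c2 c3 c4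
  have hmono : MonotoneOn L (Set.Ici Z₀) := by
    apply monotoneOn_of_deriv_nonneg (convex_Ici Z₀)
    · intro x hx
      exact (hL' x (lt_of_lt_of_le hZ₀pos hx)).continuousAt.continuousWithinAt
    · intro x hx
      rw [interior_Ici] at hx
      exact ((hL' x (lt_trans hZ₀pos hx)).differentiableAt).differentiableWithinAt
    · intro x hx
      rw [interior_Ici] at hx
      rw [(hL' x (lt_trans hZ₀pos hx)).deriv]
      exact hcond x hx.le
  -- limits at infinity
  have hR1 : Tendsto R atTop (nhds 1) := by
    have := (continuous_fst.tendsto ((1:ℝ),(0:ℝ))).comp hT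
    simpa [Function.comp_def] using this
  have hθ1 : Tendsto θ atTop (nhds 0) := by
    have := (continuous_snd.tendsto ((1:ℝ),(0:ℝ))).comp hT
    simpa [Function.comp_def] using this
  have hRt1 : Tendsto Rt atTop (nhds 1) := by
    have := (continuous_fst.tendsto ((1:ℝ),(0:ℝ))).comp hTt
    simpa [Function.comp_def] using this
  have hθt1 : Tendsto θt atTop (nhds 0) := by
    have := (continuous_snd.tendsto ((1:ℝ),(0:ℝ))).comp hTt
    simpa [Function.comp_def] using this
  have hu0 : Tendsto u atTop (nhds 0) := by
    have := hRt1.sub hR1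
    simpa [hu_def] using this
  have hv0 : Tendsto v atTop (nhds 0) := by
    have := hθt1.sub hθ1
    simpa [hv_def] using this
  have hL0 : Tendsto L atTop (nhds 0) := by
    have h := ((hu0.pow 2).const_mul ((n:ℝ)-1)).add (hv0.pow 2)
    simpa [hL_def] using h
  have hLzero : ∀ Z₁, Z₀ ≤ Z₁ → L Z₁ = 0 := by
    intro Z₁ hZ₁
    have h1 : L Z₁ ≤ 0 := by
      apply ge_of_tendsto hL0
      filter_upwards [eventually_ge_atTop Z₁] with x hx
      exact hmono (Set.mem_Ici.2 hZ₁) (Set.mem_Ici.2 (le_trans hZ₁ hx)) hx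
    linarith [hLnonneg Z₁]
  have hLeq : ∀ Z, L Z = 0 → R Z = Rt Z ∧ θ Z = θt Z := by
    intro Z h0
    simp only [hL_def] at h0
    have h1 : u Z = 0 := by nlinarith [sq_nonneg (u Z), sq_nonneg (v Z), hn1]
    have h2 : v Z = 0 := by nlinarith [sq_nonneg (u Z), sq_nonneg (v Z), hn1]
    simp only [hu_def] at h1
    simp only [hv_def] at h2
    constructor <;> linarith
  -- conclusion
  intro Z hZ
  rcases le_or_gt Z₀ Z with hcase | hcase
  · exact hLeq Z (hLzero Z hcase)
  · -- backward Grönwall on [Z, Z₀]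
    set c : ℝ → ℝ := fun t => min (Real.cos (θ t)) (Real.cos (θt t)) with hc_def
    set B : ℝ → ℝ := fun t => 1/(R t * Rt t) + 2*(1/(c t)^2) with hB_def
    have hcpos : ∀ t, 0 < t → 0 < c t := fun t ht =>
      lt_min (Real.cos_pos_of_mem_Ioo (hpos t ht).2) (Real.cos_pos_of_mem_Ioo (hpost t ht).2)
    have hBpos : ∀ t, 0 < t → 0 < B t := by
      intro t ht
      have h1 : 0 < R t * Rt t := mul_pos (hpos t ht).1 (hpost t ht).1
      have h2 := hcpos t ht
      simp only [hB_def]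
      positivity
    have hDlow : ∀ t, 0 < t → -(2*(n:ℝ)*B t) * L t ≤ D t := by
      intro t ht
      obtain ⟨ξ, hξmem, ξ₂, hξ₂mem, hDform⟩ := hDrepr t ht
      have hRpos := (hpos t ht).1
      have hRtpos := (hpost t ht).1
      obtain ⟨hg, he⟩ := slope_bounds_B (hpos t ht).2 (hpost t ht).2 hξmem hξ₂mem hRpos hRtpos
      have hw : (0:ℝ) < 1/t := by positivity
      have hP : (0:ℝ) < 1/(R t * Rt t) := by positivity
      have hQ : (0:ℝ) < 1/(c t)^2 := by
        have := hcpos t ht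
        positivity
      have key := alg_lower (a := u t) (b := v t) (g := Real.sin ξ₂ / Real.cos ξ₂ ^ 2)
        (e := 1/(R t * Rt t) - 1/Real.cos ξ ^ 2) (P := 1/(R t * Rt t)) (Q := 1/(c t)^2)
        (w := 1/t) (nn := (n:ℝ)-1) hn1 hw hP hQ (by simpa [hc_def] using hg)
        (by simpa [hc_def] using he)
      rw [hDform]
      calc -(2*(n:ℝ)*B t) * L t
          = -(2*(((n:ℝ)-1)+1)*(1/(R t * Rt t) + 2*(1/(c t)^2)))
            * (((n:ℝ)-1)*(u t)^2 + (v t)^2) := by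
            simp only [hB_def, hL_def]; ring
        _ ≤ 2*((n:ℝ)-1)*((u t)^2*((1/t)/2)
            + (Real.sin ξ₂ / Real.cos ξ₂ ^ 2) * (v t)^2
            + u t * v t * (1/(R t * Rt t) - 1/Real.cos ξ ^ 2)) := key
        _ = 2*((n:ℝ)-1) * ((u t)^2*((1/t)/2)
            + (Real.sin ξ₂ / Real.cos ξ₂ ^ 2) * (v t)^2
            + u t * v t * (1/(R t * Rt t) - 1/Real.cos ξ ^ 2)) := by ring
    -- continuity of B on [Z, Z₀]
    have hposIcc : ∀ t ∈ Set.Icc Z Z₀, (0:ℝ) < t := fun t htt => lt_of_lt_of_le hZ htt.1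
    have hRc : ContinuousOn R (Set.Icc Z Z₀) := fun t htt =>
      (hdR t (hposIcc t htt)).continuousAt.continuousWithinAt
    have hRtc : ContinuousOn Rt (Set.Icc Z Z₀) := fun t htt =>
      (hdRt t (hposIcc t htt)).continuousAt.continuousWithinAt
    have hθc : ContinuousOn θ (Set.Icc Z Z₀) := fun t htt =>
      (hdθ t (hposIcc t htt)).continuousAt.continuousWithinAt
    have hθtc : ContinuousOn θt (Set.Icc Z Z₀) := fun t htt =>
      (hdθt t (hposIcc t htt)).continuousAt.continuousWithinAt
    have hcc : ContinuousOn c (Set.Icc Z Z₀) := by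
      have h1 := Real.continuous_cos.comp_continuousOn hθc
      have h2 := Real.continuous_cos.comp_continuousOn hθtc
      exact h1.inf h2
    have hBc : ContinuousOn B (Set.Icc Z Z₀) := by
      apply ContinuousOn.add
      · exact continuousOn_const.div (hRc.mul hRtc)
          (fun t htt => (mul_pos (hpos t (hposIcc t htt)).1 (hpost t (hposIcc t htt)).1).ne')
      · exact continuousOn_const.mul (continuousOn_const.div (hcc.pow 2)
          (fun t htt => (pow_pos (hcpos t (hposIcc t htt)) 2).ne'))
    obtain ⟨ts, hts, hBmax⟩ := isCompact_Icc.exists_isMaxOn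
      ⟨Z, Set.left_mem_Icc.2 hcase.le⟩ hBc
    set K := 2*(n:ℝ)*B ts with hK_def
    have hKnn : 0 ≤ K := by
      have h1 := hBpos ts (hposIcc ts hts)
      have h2 : (0:ℝ) ≤ (n:ℝ) := by positivity
      simp only [hK_def]
      positivity
    set M : ℝ → ℝ := fun t => L t * Real.exp (K*t) with hM_def
    have hM' : ∀ t, 0 < t → HasDerivAt M
        (D t * Real.exp (K*t) + L t * (Real.exp (K*t) * K)) t := by
      intro t ht
      have hexp : HasDerivAt (fun x : ℝ => Real.exp (K*x)) (Real.exp (K*t) * K) t := by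
        have h := ((hasDerivAt_id t).const_mul K).exp
        simpa using h
      exact (hL' t ht).mul hexp
    have hMmono : MonotoneOn M (Set.Icc Z Z₀) := by
      apply monotoneOn_of_deriv_nonneg (convex_Icc Z Z₀)
      · intro x hx
        exact (hM' x (hposIcc x hx)).continuousAt.continuousWithinAt
      · intro x hx
        rw [interior_Icc] at hx
        exact ((hM' x (lt_trans hZ hx.1)).differentiableAt).differentiableWithinAt
      · intro x hx
        rw [interior_Icc] at hx
        have hx0 : 0 < x := lt_trans hZ hx.1
        rw [(hM' x hx0).deriv]
        have hD := hDlow x hx0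
        have hE : (0:ℝ) < Real.exp (K*x) := Real.exp_pos _
        have hBx : B x ≤ B ts := hBmax (Set.mem_Icc_of_Ioo hx)
        have h5 : 0 ≤ K - 2*(n:ℝ)*B x := by
          have h2 : (0:ℝ) ≤ 2*(n:ℝ) := by positivity
          simp only [hK_def]
          nlinarith [mul_le_mul_of_nonneg_left hBx h2]
        have h6 : 0 ≤ L x * Real.exp (K*x) * (K - 2*(n:ℝ)*B x) :=
          mul_nonneg (mul_nonneg (hLnonneg x) hE.le) h5
        have h7 := mul_le_mul_of_nonneg_right hD hE.le
        nlinarith [h6, h7]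
    have hMle : M Z ≤ M Z₀ :=
      hMmono (Set.left_mem_Icc.2 hcase.le) (Set.right_mem_Icc.2 hcase.le) hcase.le
    have hMZ₀ : M Z₀ = 0 := by
      simp only [hM_def, hLzero Z₀ le_rfl, zero_mul]
    have hLZ : L Z = 0 := by
      have hE : (0:ℝ) < Real.exp (K*Z) := Real.exp_pos _
      have h1 : L Z * Real.exp (K*Z) ≤ 0 := by
        rw [← hMZ₀]; exact hMle
      nlinarith [hLnonneg Z, mul_nonneg (hLnonneg Z) hE.le]
    exact hLeq Z hLZ
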